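/- arXiv:2504.19917 — 2 statements merged into one kernel-verified Lean document; each statement's English description precedes it below -/
import Mathlib

section
/- Let a < b and μ ≥ 0. For κ in a neighborhood of 1 define f(κ) = ∫_a^b π((b − κa)(t−a)/(b−a) + κa)·((b−a)/(b−κa))·g(t) dt where g : [a,b] → [0,∞) is integrable. Then f is differentiable at κ = 1 and f'(1) = (πab/(b−a)) ∫_a^b g(t) dt. In particular, if f'(1) = 0 then g = 0 a.e. on [a,b]. -/
open MeasureTheory Real intervalIntegral

/-- Derivative at `κ = 1` of the rescaled Dirichlet energy in the Pohozaev
argument, and the resulting vanishing of `g`. -/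
theorem stmt14 (a b : ℝ) (ha : 0 < a) (hab : a < b) (g : ℝ → ℝ)
    (hg : IntegrableOn g (Set.Icc a b)) (hgnn : ∀ t ∈ Set.Icc a b, 0 ≤ g t) :
    HasDerivAt (fun κ : ℝ => ∫ t in a..b,
        π * ((b - κ*a) * (t - a)/(b - a) + κ*a) * ((b - a)/(b - κ*a)) * g t)
      (π * a * b / (b - a) * ∫ t in a..b, g t) 1 ∧
    (π * a * b / (b - a) * (∫ t in a..b, g t) = 0 →
      ∀ᵐ t : ℝ ∂volume, t ∈ Set.Icc a b → g t = 0) := by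
  have hba : (0:ℝ) < b - a := by linarith
  have hIg : IntervalIntegrable g volume a b := by
    apply IntegrableOn.intervalIntegrable
    rwa [Set.uIcc_of_le hab.le]
  have hItg : IntervalIntegrable (fun t => (t - a) * g t) volume a b := by
    apply IntegrableOn.intervalIntegrable
    rw [Set.uIcc_of_le hab.le]
    apply hg.continuousOn_mul _ isCompact_Icc
    exact (continuous_id.sub continuous_const).continuousOn
  set I := ∫ t in a..b, g t with hI
  set C := ∫ t in a..b, (t - a) * g t with hC
  -- local equality
  have hopen : IsOpen {κ : ℝ | κ * a < b} := isOpen_lt (by continuity) continuous_const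
  have h1mem : (1:ℝ) ∈ {κ : ℝ | κ * a < b} := by simp [hab]
  have heq : (fun κ : ℝ => ∫ t in a..b,
        π * ((b - κ*a) * (t - a)/(b - a) + κ*a) * ((b - a)/(b - κ*a)) * g t)
      =ᶠ[nhds 1] (fun κ : ℝ => π * C + (π * (κ*a) * (b - a) / (b - κ*a)) * I) := by
    filter_upwards [hopen.mem_nhds h1mem] with κ hκ
    have hκ' : b - κ * a ≠ 0 := by
      have : κ * a < b := hκ
      intro h; linarith [this, h]
    have : ∀ t : ℝ,
        π * ((b - κ*a) * (t - a)/(b - a) + κ*a) * ((b - a)/(b - κ*a)) * g t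
          = π * ((t - a) * g t) + (π * (κ*a) * (b - a) / (b - κ*a)) * g t := by
      intro t; field_simp
    simp only [this]
    rw [intervalIntegral.integral_add ((hItg.const_mul π))
        (hIg.const_mul _), intervalIntegral.integral_const_mul,
        intervalIntegral.integral_const_mul]
  apply And.intro
  · -- derivative
    have hd : HasDerivAt (fun κ : ℝ => π * C + (π * (κ*a) * (b - a) / (b - κ*a)) * I)
        (π * a * b / (b - a) * I) 1 := by
      have hden : b - 1 * a ≠ 0 := by simp; linarith
      have h1 : HasDerivAt (fun κ : ℝ => π * (κ*a) * (b - a) / (b - κ*a))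
          ((π * a * (b - a) * (b - 1*a) - π * (1*a) * (b - a) * (-a)) / (b - 1*a)^2) 1 := by
        have hn : HasDerivAt (fun κ : ℝ => π * (κ*a) * (b - a)) (π * a * (b - a)) 1 := by
          have heq2 : (fun κ : ℝ => π * (κ*a) * (b - a)) = fun κ => (π * a * (b - a)) * κ := by
            ext κ; ring
          rw [heq2]
          simpa using (hasDerivAt_id (1:ℝ)).const_mul (π * a * (b - a))
        have hd2 : HasDerivAt (fun κ : ℝ => b - κ * a) (-a) 1 := by
          have heq3 : (fun κ : ℝ => b - κ * a) = fun κ => b - a * κ := by ext κ; ring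
          rw [heq3]
          simpa using ((hasDerivAt_id (1:ℝ)).const_mul a).const_sub b
        exact hn.div hd2 hden
      have := (h1.mul_const I).const_add (π * C)
      refine this.congr_deriv ?_
      have : b - 1 * a = b - a := by ring
      rw [this]
      field_simp
      ring
    exact hd.congr_of_eventuallyEq heq
  · intro hz
    have hIzero : I = 0 := by
      have hc : π * a * b / (b - a) ≠ 0 := by
        apply div_ne_zero _ (ne_of_gt hba)
        exact mul_ne_zero (mul_ne_zero Real.pi_ne_zero (ne_of_gt ha)) (ne_of_gt (ha.trans hab))
      exact (mul_eq_zero.mp hz).resolve_left hc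
    have hIoc : ∫ t in Set.Ioc a b, g t ∂volume = 0 := by
      rw [← intervalIntegral.integral_of_le hab.le]
      exact hIzero
    have hgoc : IntegrableOn g (Set.Ioc a b) := hg.mono_set Set.Ioc_subset_Icc_self
    have hnn : 0 ≤ᵐ[volume.restrict (Set.Ioc a b)] g := by
      filter_upwards [ae_restrict_mem measurableSet_Ioc] with t ht
      exact hgnn t (Set.Ioc_subset_Icc_self ht)
    have hze : g =ᵐ[volume.restrict (Set.Ioc a b)] 0 :=
      (MeasureTheory.integral_eq_zero_iff_of_nonneg_ae hnn hgoc).mp hIoc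
    have := (ae_restrict_iff' measurableSet_Ioc).mp hze
    have hne : ∀ᵐ t : ℝ ∂volume, t ≠ a := by
      rw [ae_iff]
      simp [measure_singleton (a : ℝ)]
    filter_upwards [this, hne] with t ht htne htmem
    exact ht ⟨lt_of_le_of_ne htmem.1 (Ne.symm htne), htmem.2⟩
end

section
/- Let u : ℝ^n → ℝ^m be a bounded C² solution of Δu = ∇W(u), where W ∈ C¹(ℝ^m) satisfies ∇W(u)·u > 0 whenever |u| ≥ R₀. Then |u(x)| < R₀ for all x ∈ ℝ^n, provided sup |u| < ∞. -/
open MeasureTheory Real Filter Topology RealInnerProductSpace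

private lemma secondDerivTest {f f' : ℝ → ℝ} {d a : ℝ}
    (hf : ∀ s, HasDerivAt f (f' s) s) (hf' : HasDerivAt f' d a)
    (hmax : IsLocalMax f a) : d ≤ 0 := by
  by_contra hd
  push_neg at hd
  have h0 : f' a = 0 := hmax.hasDerivAt_eq_zero (hf a)
  have hslope : Tendsto (slope f' a) (𝓝[≠] a) (𝓝 d) :=
    hasDerivAt_iff_tendsto_slope.1 hf'
  have hev : ∀ᶠ t in 𝓝[>] a, 0 < slope f' a t := by
    have h1 : 𝓝[>] a ≤ 𝓝[≠] a :=
      nhdsWithin_mono a (fun t ht => ne_of_gt ht)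
    exact (hslope.mono_left h1).eventually_const_lt hd
  obtain ⟨b, hab, hsub⟩ := mem_nhdsGT_iff_exists_Ioo_subset.1 hev
  obtain ⟨ε, hε, hball⟩ := Metric.eventually_nhds_iff.1 hmax
  set c := min b (a + ε) with hc
  have hac : a < c := lt_min hab (by linarith)
  have hpos : ∀ t ∈ Set.Ioo a c, 0 < f' t := by
    intro t ht
    have hs : 0 < slope f' a t :=
      hsub ⟨ht.1, lt_of_lt_of_le ht.2 (min_le_left _ _)⟩
    rw [slope_def_field, h0, sub_zero] at hs
    have h1 : 0 < t - a := sub_pos.2 ht.1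
    have := mul_pos hs h1
    rwa [div_mul_cancel₀] at this
    exact ne_of_gt h1
  have hcont : Continuous f :=
    continuous_iff_continuousAt.2 fun s => (hf s).continuousAt
  have hderiv : deriv f = f' := funext fun s => (hf s).deriv
  have hmono : StrictMonoOn f (Set.Icc a c) := by
    apply strictMonoOn_of_deriv_pos (convex_Icc a c) hcont.continuousOn
    intro t ht
    rw [interior_Icc] at ht
    rw [hderiv]
    exact hpos t ht
  set t₀ := (a + c) / 2 with ht₀
  have h₁ : a < t₀ := by simp only [ht₀]; linarith
  have h₂ : t₀ < c := by simp only [ht₀]; linarith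
  have hlt : f a < f t₀ :=
    hmono ⟨le_refl a, le_of_lt hac⟩ ⟨le_of_lt h₁, le_of_lt h₂⟩ h₁
  have hle : f t₀ ≤ f a := by
    apply hball
    rw [Real.dist_eq, abs_of_pos (sub_pos.2 h₁)]
    have : c ≤ a + ε := min_le_right _ _
    simp only [ht₀]; linarith
  linarith

private lemma dirIneq {n m : ℕ} {u : EuclideanSpace ℝ (Fin n) → EuclideanSpace ℝ (Fin m)}
    (hu : ContDiff ℝ 2 u) (ε : ℝ) (x v : EuclideanSpace ℝ (Fin n))
    (hmax : IsLocalMax (fun y => (⟪u y, u y⟫ : ℝ) - ε * ⟪y, y⟫) x) :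
    (⟪iteratedFDeriv ℝ 2 u x ![v, v], u x⟫ : ℝ)
      + ⟪fderiv ℝ u x v, fderiv ℝ u x v⟫ - ε * ⟪v, v⟫ ≤ 0 := by
  set L : ℝ → EuclideanSpace ℝ (Fin n) := fun t => x + t • v with hLdef
  have hL : ∀ t, HasDerivAt L v t := by
    intro t
    have : HasDerivAt (fun s : ℝ => s • v) ((1 : ℝ) • v) t :=
      (hasDerivAt_id t).smul_const v
    simpa [hLdef] using this.const_add x
  have hL0 : L 0 = x := by simp [hLdef]
  have hud : Differentiable ℝ u := hu.differentiable (by norm_num)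
  have hdu : ∀ s, HasDerivAt (fun t => u (L t)) (fderiv ℝ u (L s) v) s := by
    intro s
    exact ((hud (L s)).hasFDerivAt).comp_hasDerivAt s (hL s)
  set A := fderiv ℝ u x v with hA
  set B := fderiv ℝ (fderiv ℝ u) x v v with hB
  have hdu0 : HasDerivAt (fun t => u (L t)) A 0 := by
    have := hdu 0
    rwa [hL0] at this
  have hfd : ContDiff ℝ 1 (fderiv ℝ u) := hu.fderiv_right (le_refl _)
  have hdu2 : HasDerivAt (fun s => fderiv ℝ u (L s) v) B 0 := by
    have h1 : HasDerivAt (fun s => fderiv ℝ u (L s)) (fderiv ℝ (fderiv ℝ u) (L 0) v) 0 :=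
      (((hfd.differentiable one_ne_zero) (L 0)).hasFDerivAt).comp_hasDerivAt 0 (hL 0)
    rw [hL0] at h1
    have := h1.clm_apply (hasDerivAt_const 0 v)
    simpa [hB] using this
  -- derivative functions
  set D : ℝ → ℝ := fun s =>
    ((⟪u (L s), fderiv ℝ u (L s) v⟫ : ℝ) + ⟪fderiv ℝ u (L s) v, u (L s)⟫)
      - ε * ((⟪L s, v⟫ : ℝ) + ⟪v, L s⟫) with hD
  have hφ : ∀ s, HasDerivAt (fun t => (⟪u (L t), u (L t)⟫ : ℝ) - ε * ⟪L t, L t⟫) (D s) s := by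
    intro s
    exact (HasDerivAt.inner ℝ (hdu s) (hdu s)).sub
      ((HasDerivAt.inner ℝ (hL s) (hL s)).const_mul ε)
  have hD1 : HasDerivAt (fun s => (⟪u (L s), fderiv ℝ u (L s) v⟫ : ℝ) + ⟪fderiv ℝ u (L s) v, u (L s)⟫)
      ((⟪u x, B⟫ + ⟪A, A⟫) + ((⟪A, A⟫ : ℝ) + ⟪B, u x⟫)) 0 := by
    have e1 := HasDerivAt.inner ℝ hdu0 hdu2
    have e2 := HasDerivAt.inner ℝ hdu2 hdu0
    have := e1.add e2
    rw [hL0] at this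
    exact this
  have hDχ : HasDerivAt (fun s => (⟪L s, v⟫ : ℝ) + ⟪v, L s⟫) ((⟪v, v⟫ : ℝ) + ⟪v, v⟫) 0 := by
    have e1 := HasDerivAt.inner ℝ (hL 0) (hasDerivAt_const (0:ℝ) v)
    have e2 := HasDerivAt.inner ℝ (hasDerivAt_const (0:ℝ) v) (hL 0)
    have := e1.add e2
    simp only [hL0, inner_zero_left, inner_zero_right, zero_add, add_zero] at this
    exact this
  have hDall : HasDerivAt D
      (((⟪u x, B⟫ + ⟪A, A⟫) + ((⟪A, A⟫ : ℝ) + ⟪B, u x⟫)) - ε * ((⟪v, v⟫ : ℝ) + ⟪v, v⟫)) 0 :=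
    hD1.sub (hDχ.const_mul ε)
  have hmaxφ : IsLocalMax (fun t => (⟪u (L t), u (L t)⟫ : ℝ) - ε * ⟪L t, L t⟫) 0 := by
    have hLc : Tendsto L (𝓝 0) (𝓝 x) := by
      have := (hL 0).continuousAt
      rwa [ContinuousAt, hL0] at this
    have := hLc.eventually hmax
    simpa [IsLocalMax, IsMaxFilter, hL0] using this
  have hkey : (((⟪u x, B⟫ + ⟪A, A⟫) + ((⟪A, A⟫ : ℝ) + ⟪B, u x⟫))
      - ε * ((⟪v, v⟫ : ℝ) + ⟪v, v⟫)) ≤ 0 :=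
    secondDerivTest hφ hDall hmaxφ
  have h2 : iteratedFDeriv ℝ 2 u x ![v, v] = B := by
    rw [iteratedFDeriv_two_apply]
    simp [hB]
  rw [h2]
  have hcomm : (⟪u x, B⟫ : ℝ) = ⟪B, u x⟫ := real_inner_comm _ _
  linarith

/-- Maximum principle bound: a bounded entire solution of `Δu = ∇W(u)` with
`∇W(u)·u > 0` for `|u| ≥ R₀` satisfies `|u| < R₀` everywhere. -/
theorem stmt15 {n m : ℕ} (W : EuclideanSpace ℝ (Fin m) → ℝ) (hW : ContDiff ℝ 1 W)
    (R₀ : ℝ) (hR₀ : 0 < R₀)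
    (hWgrad : ∀ v : EuclideanSpace ℝ (Fin m), R₀ ≤ ‖v‖ →
      0 < (inner ℝ (gradient W v) v : ℝ))
    (u : EuclideanSpace ℝ (Fin n) → EuclideanSpace ℝ (Fin m))
    (hu : ContDiff ℝ 2 u) (C : ℝ) (hbdd : ∀ x, ‖u x‖ ≤ C)
    (heq : ∀ x, (∑ i : Fin n, iteratedFDeriv ℝ 2 u x
        ![EuclideanSpace.single i 1, EuclideanSpace.single i 1]) = gradient W (u x)) :
    ∀ x, ‖u x‖ < R₀ := by
  classical
  by_cases hC : C < R₀
  · exact fun x => lt_of_le_of_lt (hbdd x) hC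
  push_neg at hC
  rcases Nat.eq_zero_or_pos m with hm | hm
  · subst hm
    intro x
    have : u x = 0 := Subsingleton.elim _ _
    rw [this, norm_zero]; exact hR₀
  -- uniform positivity δ on the compact annulus
  set K : Set (EuclideanSpace ℝ (Fin m)) :=
    Metric.closedBall 0 C ∩ {v | R₀ ≤ ‖v‖} with hK
  have hKc : IsCompact K :=
    (isCompact_closedBall 0 C).inter_right (isClosed_le continuous_const continuous_norm)
  have hKne : K.Nonempty := by
    refine ⟨R₀ • EuclideanSpace.single (⟨0, hm⟩ : Fin m) 1, ?_, ?_⟩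
    · simp [Metric.mem_closedBall, norm_smul, EuclideanSpace.norm_single,
        abs_of_pos hR₀, hC]
    · simp [norm_smul, EuclideanSpace.norm_single, abs_of_pos hR₀]
  have hgradc : Continuous fun v => gradient W v := by
    have : (fun v => gradient W v)
        = fun v => (InnerProductSpace.toDual ℝ (EuclideanSpace ℝ (Fin m))).symm (fderiv ℝ W v) :=
      rfl
    rw [this]
    exact (InnerProductSpace.toDual ℝ _).symm.continuous.comp (hW.continuous_fderiv one_ne_zero)
  have hhc : Continuous fun v : EuclideanSpace ℝ (Fin m) => (⟪gradient W v, v⟫ : ℝ) :=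
    hgradc.inner continuous_id
  obtain ⟨v₀, hv₀K, hv₀min⟩ := hKc.exists_isMinOn hKne hhc.continuousOn
  set δ : ℝ := ⟪gradient W v₀, v₀⟫ with hδ
  have hδpos : 0 < δ := hWgrad v₀ hv₀K.2
  have hδle : ∀ v, R₀ ≤ ‖v‖ → ‖v‖ ≤ C → δ ≤ (⟪gradient W v, v⟫ : ℝ) := by
    intro v h1 h2
    exact hv₀min ⟨Metric.mem_closedBall.2 (by simpa using h2), h1⟩
  -- key: at any local max of the perturbed functional, |u| < R₀
  have key : ∀ ε : ℝ, 0 ≤ ε → (n : ℝ) * ε < δ → ∀ z,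
      IsLocalMax (fun y => (⟪u y, u y⟫ : ℝ) - ε * ⟪y, y⟫) z → ‖u z‖ < R₀ := by
    intro ε hε hεδ z hz
    by_contra hge
    push_neg at hge
    have hsum : ∀ i : Fin n,
        (⟪iteratedFDeriv ℝ 2 u z ![EuclideanSpace.single i 1, EuclideanSpace.single i 1], u z⟫ : ℝ)
          + ⟪fderiv ℝ u z (EuclideanSpace.single i 1), fderiv ℝ u z (EuclideanSpace.single i 1)⟫
          - ε ≤ 0 := by
      intro i
      have h1 := dirIneq hu ε z (EuclideanSpace.single i 1) hz
      have h2 : (⟪(EuclideanSpace.single i (1:ℝ)), EuclideanSpace.single i 1⟫ : ℝ) = 1 := by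
        rw [real_inner_self_eq_norm_sq, EuclideanSpace.norm_single]
        norm_num
      rw [h2] at h1
      linarith
    have htot : (∑ i : Fin n,
        ((⟪iteratedFDeriv ℝ 2 u z ![EuclideanSpace.single i 1, EuclideanSpace.single i 1], u z⟫ : ℝ)
          + ⟪fderiv ℝ u z (EuclideanSpace.single i 1), fderiv ℝ u z (EuclideanSpace.single i 1)⟫
          - ε)) ≤ 0 :=
      Finset.sum_nonpos fun i _ => hsum i
    rw [Finset.sum_sub_distrib, Finset.sum_add_distrib] at htot
    rw [← sum_inner, heq z] at htot
    have hcard : (∑ _i : Fin n, ε) = (n : ℝ) * ε := by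
      simp [Finset.sum_const, Finset.card_univ, nsmul_eq_mul]
    rw [hcard] at htot
    have hnn : (0:ℝ) ≤ ∑ i : Fin n,
        (⟪fderiv ℝ u z (EuclideanSpace.single i 1), fderiv ℝ u z (EuclideanSpace.single i 1)⟫ : ℝ) :=
      Finset.sum_nonneg fun i _ => real_inner_self_nonneg
    have hlow : δ ≤ (⟪gradient W (u z), u z⟫ : ℝ) := hδle _ hge (hbdd z)
    linarith
  have hC0 : 0 ≤ C := le_trans (norm_nonneg (u 0)) (hbdd 0)
  -- step 1: |u|² ≤ R₀² everywhere
  have step1 : ∀ x, (⟪u x, u x⟫ : ℝ) ≤ R₀ ^ 2 := by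
    intro x
    by_contra hlt
    push_neg at hlt
    set S : ℝ := ‖x‖ ^ 2 with hS
    set Dv : ℝ := ⟪u x, u x⟫ - R₀ ^ 2 with hDv
    have hDvpos : 0 < Dv := by rw [hDv]; linarith
    have hSnn : 0 ≤ S := sq_nonneg _
    set ε : ℝ := min (δ / (n + 1)) (Dv / (S + 1)) with hε
    have hεpos : 0 < ε :=
      lt_min (div_pos hδpos (by positivity)) (div_pos hDvpos (by positivity))
    have hεδ : (n : ℝ) * ε < δ := by
      have h1 : ε ≤ δ / (n + 1) := min_le_left _ _
      have h2 : (n : ℝ) * ε ≤ (n : ℝ) * (δ / (n + 1)) :=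
        mul_le_mul_of_nonneg_left h1 (Nat.cast_nonneg n)
      have h3 : (n : ℝ) * (δ / (n + 1)) < δ := by
        rw [mul_div_assoc']
        rw [div_lt_iff₀ (by positivity)]
        nlinarith [Nat.cast_nonneg (α := ℝ) n]
      linarith
    -- existence of a global max of the perturbed functional
    have hgcont : Continuous fun y => (⟪u y, u y⟫ : ℝ) - ε * ⟪y, y⟫ :=
      (hu.continuous.inner hu.continuous).sub
        (continuous_const.mul (continuous_id.inner continuous_id))
    have hcoer : Tendsto (fun y => (⟪u y, u y⟫ : ℝ) - ε * ⟪y, y⟫)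
        (cocompact (EuclideanSpace ℝ (Fin n))) atBot := by
      apply tendsto_atBot_mono
        (g := fun y => (⟪u y, u y⟫ : ℝ) - ε * ⟪y, y⟫)
        (f := fun y => C ^ 2 - ε * ‖y‖ ^ 2)
      · intro y
        have h1 : (⟪u y, u y⟫ : ℝ) = ‖u y‖ ^ 2 := real_inner_self_eq_norm_sq _
        have h2 : (⟪y, y⟫ : ℝ) = ‖y‖ ^ 2 := real_inner_self_eq_norm_sq _
        have h3 : ‖u y‖ ^ 2 ≤ C ^ 2 := by
          have := hbdd y
          nlinarith [norm_nonneg (u y)]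
        rw [h1, h2]
        linarith
      · have h1 : Tendsto (fun y : EuclideanSpace ℝ (Fin n) => ‖y‖ ^ 2)
            (cocompact _) atTop :=
          (tendsto_pow_atTop (two_ne_zero)).comp tendsto_norm_cocompact_atTop
        have h2 : Tendsto (fun y : EuclideanSpace ℝ (Fin n) => ε * ‖y‖ ^ 2)
            (cocompact _) atTop := h1.const_mul_atTop hεpos
        have h3 := tendsto_neg_atTop_atBot.comp h2
        have h4 := tendsto_atBot_add_const_left _ (C ^ 2) h3
        simpa [Function.comp_def, sub_eq_add_neg] using h4
    obtain ⟨z, hzmax⟩ := hgcont.exists_forall_ge hcoer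
    have hzloc : IsLocalMax (fun y => (⟪u y, u y⟫ : ℝ) - ε * ⟪y, y⟫) z :=
      Filter.Eventually.of_forall hzmax
    have hz : ‖u z‖ < R₀ := key ε (le_of_lt hεpos) hεδ z hzloc
    have hz2 : (⟪u z, u z⟫ : ℝ) < R₀ ^ 2 := by
      rw [real_inner_self_eq_norm_sq]
      nlinarith [norm_nonneg (u z)]
    have hx1 : (⟪u x, u x⟫ : ℝ) - ε * ⟪x, x⟫ ≤ (⟪u z, u z⟫ : ℝ) - ε * ⟪z, z⟫ := hzmax x
    have hz3 : (0:ℝ) ≤ ε * ⟪z, z⟫ :=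
      mul_nonneg (le_of_lt hεpos) real_inner_self_nonneg
    have hεS : ε * S < Dv := by
      have h1 : ε ≤ Dv / (S + 1) := min_le_right _ _
      have h2 : ε * S ≤ (Dv / (S + 1)) * S := mul_le_mul_of_nonneg_right h1 hSnn
      have h3 : (Dv / (S + 1)) * S < Dv := by
        rw [div_mul_eq_mul_div, div_lt_iff₀ (by positivity)]
        nlinarith
      linarith
    have hxS : (⟪x, x⟫ : ℝ) = S := real_inner_self_eq_norm_sq _
    rw [hxS] at hx1
    simp only [hDv] at hεS
    linarith
  -- step 2: strict inequality
  intro x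
  by_contra hge
  push_neg at hge
  have hEq : (⟪u x, u x⟫ : ℝ) = R₀ ^ 2 := by
    have h1 := step1 x
    have h2 : R₀ ^ 2 ≤ (⟪u x, u x⟫ : ℝ) := by
      rw [real_inner_self_eq_norm_sq]
      nlinarith
    linarith
  have hmax0 : IsLocalMax (fun y => (⟪u y, u y⟫ : ℝ) - (0:ℝ) * ⟪y, y⟫) x := by
    apply Filter.Eventually.of_forall
    intro y
    simp only [zero_mul, sub_zero]
    rw [hEq]
    exact step1 y
  have := key 0 le_rfl (by simpa using hδpos) x hmax0
  linarith
end
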